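/- In propositional multirole logic MRL, the 1-cut rule is admissible: if Γ, ⟨∅⟩A is derivable, then Γ is derivable. -/

import Mathlib

/-- Formulas of propositional multirole logic over role set `ρ`:
atoms, generalized negation `¬_f`, and conjunction `∧_U`. -/
inductive MFormula (ρ : Type) : Type where
  | atom : ℕ → MFormula ρ
  | neg  : (ρ → ρ) → MFormula ρ → MFormula ρ
  | conj : Ultrafilter ρ → MFormula ρ → MFormula ρ → MFormula ρ

/-- Sequents: multisets of i-formulas `⟨R⟩A`. -/
abbrev MSeq (ρ : Type) := Multiset (Set ρ × MFormula ρ)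

/-- Derivability in propositional MRL. -/
inductive MDeriv {ρ : Type} : MSeq ρ → Prop where
  | id (Γ : MSeq ρ) (a : ℕ) (L : List (Set ρ)) :
      L.Pairwise Disjoint → (⋃ R ∈ L, R) = Set.univ →
      MDeriv (Γ + (↑(L.map fun R => ((R, MFormula.atom a) : Set ρ × MFormula ρ)) : MSeq ρ))
  | contract (Γ : MSeq ρ) (R : Set ρ) (A : MFormula ρ) :
      MDeriv ((R, A) ::ₘ (R, A) ::ₘ Γ) → MDeriv ((R, A) ::ₘ Γ)
  | neg (Γ : MSeq ρ) (R : Set ρ) (f : ρ → ρ) (A : MFormula ρ) :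
      MDeriv ((f ⁻¹' R, A) ::ₘ Γ) → MDeriv ((R, MFormula.neg f A) ::ₘ Γ)
  | conj_neg_l (Γ : MSeq ρ) (R : Set ρ) (U : Ultrafilter ρ) (A B : MFormula ρ) :
      R ∉ U → MDeriv ((R, A) ::ₘ Γ) → MDeriv ((R, MFormula.conj U A B) ::ₘ Γ)
  | conj_neg_r (Γ : MSeq ρ) (R : Set ρ) (U : Ultrafilter ρ) (A B : MFormula ρ) :
      R ∉ U → MDeriv ((R, B) ::ₘ Γ) → MDeriv ((R, MFormula.conj U A B) ::ₘ Γ)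
  | conj_pos (Γ : MSeq ρ) (R : Set ρ) (U : Ultrafilter ρ) (A B : MFormula ρ) :
      R ∈ U → MDeriv ((R, A) ::ₘ Γ) → MDeriv ((R, B) ::ₘ Γ) →
      MDeriv ((R, MFormula.conj U A B) ::ₘ Γ)

private lemma cons_eq_add_split {α : Type*} {a : α} {s t u : Multiset α}
    (h : a ::ₘ s = t + u) :
    (∃ t', t = a ::ₘ t' ∧ s = t' + u) ∨ (∃ u', u = a ::ₘ u' ∧ s = t + u') := by
  have ha : a ∈ t + u := h ▸ Multiset.mem_cons_self a s
  rcases Multiset.mem_add.1 ha with h1 | h1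
  · obtain ⟨t', rfl⟩ := Multiset.exists_cons_of_mem h1
    exact Or.inl ⟨t', rfl, by rwa [Multiset.cons_add, Multiset.cons_inj_right] at h⟩
  · obtain ⟨u', rfl⟩ := Multiset.exists_cons_of_mem h1
    refine Or.inr ⟨u', rfl, ?_⟩
    rw [add_comm, Multiset.cons_add, Multiset.cons_inj_right, add_comm] at h
    exact h

private lemma mrl_cut_aux {ρ : Type} {Δ : MSeq ρ} (h : MDeriv Δ) :
    ∀ S Γ : MSeq ρ, Δ = S + Γ → (∀ p ∈ S, p.1 = (∅ : Set ρ)) → MDeriv Γ := by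
  classical
  induction h with
  | id Γ₀ a L hd hu =>
    intro S Γ hEq hS
    set fn : Set ρ → Set ρ × MFormula ρ := fun R => ((R, MFormula.atom a)) with hfn
    set M : MSeq ρ := (↑(L.map fn) : MSeq ρ) with hM
    have hc : ∀ x, Multiset.count x Γ₀ + Multiset.count x M
        = Multiset.count x S + Multiset.count x Γ := by
      intro x; rw [← Multiset.count_add, ← Multiset.count_add, hEq]
    have hS2le : S - Γ₀ ≤ M := by
      rw [Multiset.le_iff_count]; intro x
      have := hc x; simp only [Multiset.count_sub]; omega
    have hGamma : Γ = (Γ₀ - S) + (M - (S - Γ₀)) := by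
      ext x
      have := hc x
      simp only [Multiset.count_add, Multiset.count_sub]; omega
    -- realize M - (S - Γ₀) as a sublist of L.map fn
    have hle : ((M - (S - Γ₀)).toList : Multiset _) ≤ ((L.map fn : List _) : MSeq ρ) := by
      rw [Multiset.coe_toList, ← hM]; exact tsub_le_self
    obtain ⟨l₂, hperm, hsl⟩ := Multiset.coe_le.1 hle
    obtain ⟨L', hL', rfl⟩ := List.sublist_map_iff.1 hsl
    have hMS : (↑(L'.map fn) : MSeq ρ) = M - (S - Γ₀) := by
      rw [← Multiset.coe_toList (M - (S - Γ₀))]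
      exact Multiset.coe_eq_coe.2 hperm
    -- roles removed are all empty
    have hkey : ∀ R ∈ L, R ∈ L' ∨ R = ∅ := by
      intro R hR
      by_cases hR' : R ∈ L'
      · exact Or.inl hR'
      · right
        have hmem : fn R ∈ M := by
          rw [hM]; exact Multiset.mem_coe.2 (List.mem_map_of_mem (f := fn) hR)
        have hnot : fn R ∉ (↑(L'.map fn) : MSeq ρ) := by
          simp only [Multiset.mem_coe, List.mem_map]
          rintro ⟨R'', hR'', hfe⟩
          have : R'' = R := congrArg Prod.fst hfe
          exact hR' (this ▸ hR'')
        have h0 : Multiset.count (fn R) (M - (S - Γ₀)) = 0 := by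
          rw [← hMS]; exact Multiset.count_eq_zero.2 hnot
        rw [Multiset.count_sub] at h0
        have h1 : 1 ≤ Multiset.count (fn R) M := Multiset.one_le_count_iff_mem.2 hmem
        have h2 : fn R ∈ S - Γ₀ := by
          rw [← Multiset.one_le_count_iff_mem]; omega
        have h3 : fn R ∈ S := Multiset.mem_of_le tsub_le_self h2
        exact hS _ h3
    have hu' : (⋃ R ∈ L', R) = Set.univ := by
      rw [Set.eq_univ_iff_forall]; intro x
      have hx : x ∈ ⋃ R ∈ L, R := hu.symm ▸ Set.mem_univ x
      simp only [Set.mem_iUnion, exists_prop] at hx ⊢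
      obtain ⟨R, hRL, hxR⟩ := hx
      rcases hkey R hRL with hmem | rfl
      · exact ⟨R, hmem, hxR⟩
      · exact absurd hxR (Set.notMem_empty x)
    rw [hGamma, ← hMS]
    exact MDeriv.id (Γ₀ - S) a L' (hd.sublist hL') hu'
  | contract Γ₀ R A hprem ih =>
    intro S Γ hEq hS
    rcases cons_eq_add_split hEq with ⟨S', rfl, hs⟩ | ⟨Γ', rfl, hs⟩
    · refine ih ((R, A) ::ₘ (R, A) ::ₘ S') Γ ?_ ?_
      · rw [hs]; simp [Multiset.cons_add]
      · intro p hp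
        rcases Multiset.mem_cons.1 hp with rfl | hp
        · exact hS _ (Multiset.mem_cons_self _ _)
        · exact hS _ hp
    · refine MDeriv.contract Γ' R A (ih S ((R, A) ::ₘ (R, A) ::ₘ Γ') ?_ hS)
      rw [hs]
      ext x; simp [Multiset.count_cons]
  | neg Γ₀ R f A hprem ih =>
    intro S Γ hEq hS
    rcases cons_eq_add_split hEq with ⟨S', rfl, hs⟩ | ⟨Γ', rfl, hs⟩
    · have hR : R = ∅ := hS _ (Multiset.mem_cons_self _ _)
      refine ih ((f ⁻¹' R, A) ::ₘ S') Γ ?_ ?_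
      · rw [hs]; simp [Multiset.cons_add]
      · intro p hp
        rcases Multiset.mem_cons.1 hp with rfl | hp
        · simp [hR]
        · exact hS _ (Multiset.mem_cons_of_mem hp)
    · refine MDeriv.neg Γ' R f A (ih S ((f ⁻¹' R, A) ::ₘ Γ') ?_ hS)
      rw [hs]
      ext x; simp [Multiset.count_cons]
  | conj_neg_l Γ₀ R U A B hU hprem ih =>
    intro S Γ hEq hS
    rcases cons_eq_add_split hEq with ⟨S', rfl, hs⟩ | ⟨Γ', rfl, hs⟩
    · have hR : R = ∅ := hS _ (Multiset.mem_cons_self _ _)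
      refine ih ((R, A) ::ₘ S') Γ ?_ ?_
      · rw [hs]; simp [Multiset.cons_add]
      · intro p hp
        rcases Multiset.mem_cons.1 hp with rfl | hp
        · simpa using hR
        · exact hS _ (Multiset.mem_cons_of_mem hp)
    · refine MDeriv.conj_neg_l Γ' R U A B hU (ih S ((R, A) ::ₘ Γ') ?_ hS)
      rw [hs]
      ext x; simp [Multiset.count_cons]
  | conj_neg_r Γ₀ R U A B hU hprem ih =>
    intro S Γ hEq hS
    rcases cons_eq_add_split hEq with ⟨S', rfl, hs⟩ | ⟨Γ', rfl, hs⟩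
    · have hR : R = ∅ := hS _ (Multiset.mem_cons_self _ _)
      refine ih ((R, B) ::ₘ S') Γ ?_ ?_
      · rw [hs]; simp [Multiset.cons_add]
      · intro p hp
        rcases Multiset.mem_cons.1 hp with rfl | hp
        · simpa using hR
        · exact hS _ (Multiset.mem_cons_of_mem hp)
    · refine MDeriv.conj_neg_r Γ' R U A B hU (ih S ((R, B) ::ₘ Γ') ?_ hS)
      rw [hs]
      ext x; simp [Multiset.count_cons]
  | conj_pos Γ₀ R U A B hU hpA hpB ihA ihB =>
    intro S Γ hEq hS
    rcases cons_eq_add_split hEq with ⟨S', rfl, hs⟩ | ⟨Γ', rfl, hs⟩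
    · have hR : R = ∅ := hS _ (Multiset.mem_cons_self _ _)
      refine ihA ((R, A) ::ₘ S') Γ ?_ ?_
      · rw [hs]; simp [Multiset.cons_add]
      · intro p hp
        rcases Multiset.mem_cons.1 hp with rfl | hp
        · simpa using hR
        · exact hS _ (Multiset.mem_cons_of_mem hp)
    · refine MDeriv.conj_pos Γ' R U A B hU
        (ihA S ((R, A) ::ₘ Γ') ?_ hS) (ihB S ((R, B) ::ₘ Γ') ?_ hS) <;>
      · rw [hs]; ext x; simp [Multiset.count_cons]

/-- 1-cut is admissible in MRL: an i-formula interpreted at the empty role set can be dropped. -/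
theorem mrl_one_cut {ρ : Type} (Γ : MSeq ρ) (A : MFormula ρ)
    (h : MDeriv ((∅, A) ::ₘ Γ)) : MDeriv Γ := by
  exact mrl_cut_aux h {((∅ : Set ρ), A)} Γ (by rw [Multiset.singleton_add]) (by simp)
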